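/- arXiv:2601.08685 — 2 statements merged into one kernel-verified Lean document; each statement's English description precedes it below -/
import Mathlib

section
/- Let H and H' be real inner product spaces, let M be a subset of H, let 0 ≤ δ < 1, and let Φ : H → H' be a linear map that is a δ-stable embedding of M ∪ (−M). Then for every ℓ, s ∈ M, |⟨Φℓ, Φs⟩ − ⟨ℓ, s⟩| ≤ (δ/2)(‖ℓ‖² + ‖s‖²). -/
open Pointwise

/-- **Preservation of inner products under stable embeddings.**
If `Φ` is a `δ`-stable embedding of `M ∪ (-M)`, then inner products between points of `M`
are preserved up to `δ/2 (‖ℓ‖² + ‖s‖²)`. -/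
theorem inner_preservation_of_stable_embedding
    {H H' : Type*} [NormedAddCommGroup H] [InnerProductSpace ℝ H]
    [NormedAddCommGroup H'] [InnerProductSpace ℝ H']
    (M : Set H) (δ : ℝ) (hδ0 : 0 ≤ δ) (hδ1 : δ < 1)
    (Φ : H →ₗ[ℝ] H')
    (hΦ : ∀ x ∈ M ∪ -M, ∀ y ∈ M ∪ -M,
      (1 - δ) * ‖x - y‖ ^ 2 ≤ ‖Φ x - Φ y‖ ^ 2 ∧
        ‖Φ x - Φ y‖ ^ 2 ≤ (1 + δ) * ‖x - y‖ ^ 2)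
    (ℓ s : H) (hℓ : ℓ ∈ M) (hs : s ∈ M) :
    |(inner ℝ (Φ ℓ) (Φ s) : ℝ) - (inner ℝ ℓ s : ℝ)| ≤ δ / 2 * (‖ℓ‖ ^ 2 + ‖s‖ ^ 2) := by
  have hℓ' : ℓ ∈ M ∪ -M := Or.inl hℓ
  have hs' : s ∈ M ∪ -M := Or.inl hs
  have hns : -s ∈ M ∪ -M := Or.inr (Set.neg_mem_neg.mpr hs)
  obtain ⟨h1, h2⟩ := hΦ ℓ hℓ' s hs'
  obtain ⟨h3, h4⟩ := hΦ ℓ hℓ' (-s) hns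
  rw [map_neg, sub_neg_eq_add] at h3 h4
  rw [sub_neg_eq_add] at h3 h4
  have e1 : ‖Φ ℓ - Φ s‖ ^ 2 = ‖Φ ℓ‖ ^ 2 - 2 * inner ℝ (Φ ℓ) (Φ s) + ‖Φ s‖ ^ 2 :=
    @norm_sub_sq_real H' _ _ _ _
  have e2 : ‖Φ ℓ + Φ s‖ ^ 2 = ‖Φ ℓ‖ ^ 2 + 2 * inner ℝ (Φ ℓ) (Φ s) + ‖Φ s‖ ^ 2 :=
    @norm_add_sq_real H' _ _ _ _
  have e3 : ‖ℓ - s‖ ^ 2 = ‖ℓ‖ ^ 2 - 2 * inner ℝ ℓ s + ‖s‖ ^ 2 := @norm_sub_sq_real H _ _ _ _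
  have e4 : ‖ℓ + s‖ ^ 2 = ‖ℓ‖ ^ 2 + 2 * inner ℝ ℓ s + ‖s‖ ^ 2 := @norm_add_sq_real H _ _ _ _
  rw [abs_le]
  constructor <;> nlinarith [h1, h2, h3, h4]
end

section
/- Let H and H' be real inner product spaces, let M be a subset of H, let 0 ≤ δ < 1, and let Φ : H → H' be a linear map that is a δ-stable embedding of M ∪ (−M). Then for every ℓ, s ∈ M, ⟨Φℓ, Φs⟩ ≥ ⟨ℓ, s⟩ − (δ/2)(‖ℓ‖² + ‖s‖²). -/
open Pointwise

/-- **Lower bound on inner products under stable embeddings.** -/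
theorem inner_lower_bound_of_stable_embedding
    {H H' : Type*} [NormedAddCommGroup H] [InnerProductSpace ℝ H]
    [NormedAddCommGroup H'] [InnerProductSpace ℝ H']
    (M : Set H) (δ : ℝ) (hδ0 : 0 ≤ δ) (hδ1 : δ < 1)
    (Φ : H →ₗ[ℝ] H')
    (hΦ : ∀ x ∈ M ∪ -M, ∀ y ∈ M ∪ -M,
      (1 - δ) * ‖x - y‖ ^ 2 ≤ ‖Φ x - Φ y‖ ^ 2 ∧
        ‖Φ x - Φ y‖ ^ 2 ≤ (1 + δ) * ‖x - y‖ ^ 2)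
    (ℓ s : H) (hℓ : ℓ ∈ M) (hs : s ∈ M) :
    (inner ℝ (Φ ℓ) (Φ s) : ℝ) ≥ (inner ℝ ℓ s : ℝ) - δ / 2 * (‖ℓ‖ ^ 2 + ‖s‖ ^ 2) := by
  have hℓ' : ℓ ∈ M ∪ -M := Or.inl hℓ
  have hs' : s ∈ M ∪ -M := Or.inl hs
  have hns : -s ∈ M ∪ -M := Or.inr (Set.neg_mem_neg.mpr hs)
  have h1 := (hΦ ℓ hℓ' (-s) hns).1
  have h2 := (hΦ ℓ hℓ' s hs').2
  rw [map_neg, sub_neg_eq_add, sub_neg_eq_add] at h1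
  have e1 : ‖Φ ℓ + Φ s‖ ^ 2 = ‖Φ ℓ‖ ^ 2 + 2 * inner ℝ (Φ ℓ) (Φ s) + ‖Φ s‖ ^ 2 :=
    @norm_add_sq_real _ _ _ _ _
  have e2 : ‖Φ ℓ - Φ s‖ ^ 2 = ‖Φ ℓ‖ ^ 2 - 2 * inner ℝ (Φ ℓ) (Φ s) + ‖Φ s‖ ^ 2 :=
    @norm_sub_sq_real _ _ _ _ _
  have e3 : ‖ℓ + s‖ ^ 2 = ‖ℓ‖ ^ 2 + 2 * inner ℝ ℓ s + ‖s‖ ^ 2 := @norm_add_sq_real _ _ _ _ _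
  have e4 : ‖ℓ - s‖ ^ 2 = ‖ℓ‖ ^ 2 - 2 * inner ℝ ℓ s + ‖s‖ ^ 2 := @norm_sub_sq_real _ _ _ _ _
  nlinarith [h1, h2]
end
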